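/- Tweedie's formula: Let X₀ be a random vector in ℝ^d with density p₀, let ε ∼ N(0, I_d) be independent of X₀, and for μ_t, σ_t > 0 set X_t = μ_t X₀ + σ_t ε with marginal density p_t(x) = ∫ φ_d(x; μ_t x₀, σ_t² I_d) p₀(x₀) dx₀. Then for every x ∈ ℝ^d, ∇ log p_t(x) + x/σ_t² = (μ_t/σ_t²) · E[X₀ | X_t = x], where E[X₀ | X_t = x] = ∫ x₀ φ_d(x; μ_t x₀, σ_t² I_d) p₀(x₀) dx₀ / p_t(x). -/

import Mathlib

open MeasureTheory Real

/-- The `d`-dimensional Gaussian density `φ_d(x; m, σ² I_d)`. -/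
noncomputable def gaussKernel (d : ℕ) (σ2 : ℝ) (x m : Fin d → ℝ) : ℝ :=
  (2 * Real.pi * σ2) ^ (-(d : ℝ) / 2) *
    Real.exp (-(∑ i, (x i - m i) ^ 2) / (2 * σ2))

/-- The Fréchet derivative of `y ↦ gaussKernel d σ2 y m`. -/
noncomputable def gaussD (d : ℕ) (σ2 : ℝ) (y m : Fin d → ℝ) : (Fin d → ℝ) →L[ℝ] ℝ :=
  (-σ2⁻¹ * gaussKernel d σ2 y m) •
    (∑ i, (y i - m i) • ContinuousLinearMap.proj (R := ℝ) (φ := fun _ : Fin d => ℝ) i)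

lemma gaussKernel_pos {d : ℕ} {σ2 : ℝ} (hσ2 : 0 < σ2) (x m : Fin d → ℝ) :
    0 < gaussKernel d σ2 x m :=
  mul_pos (Real.rpow_pos_of_pos (by positivity) _) (Real.exp_pos _)

lemma hasFDerivAt_gaussKernel {d : ℕ} {σ2 : ℝ} (hσ2 : 0 < σ2) (m y : Fin d → ℝ) :
    HasFDerivAt (fun y => gaussKernel d σ2 y m) (gaussD d σ2 y m) y := by
  have hh : HasFDerivAt (fun y : Fin d → ℝ => ∑ i, (y i - m i) ^ 2)
      (∑ i : Fin d, ((2:ℝ) * (y i - m i)) •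
        ContinuousLinearMap.proj (R := ℝ) (φ := fun _ : Fin d => ℝ) i) y := by
    refine HasFDerivAt.fun_sum fun i _ => ?_
    have h := (hasFDerivAt_apply (𝕜 := ℝ) i y).sub_const (m i)
    have h2 := h.fun_mul h
    have he : (fun z : Fin d → ℝ => (z i - m i) ^ 2)
        = fun z => (z i - m i) * (z i - m i) := by funext z; ring
    rw [he]
    refine h2.congr_fderiv ?_
    ext v
    simp [two_mul, add_mul]
  have h2 := ((hh.neg.mul_const ((2*σ2)⁻¹)).exp).const_mul
      ((2 * Real.pi * σ2) ^ (-(d:ℝ)/2))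
  have heq : (fun y : Fin d → ℝ => (2 * Real.pi * σ2) ^ (-(d:ℝ)/2) *
      Real.exp (-(∑ i, (y i - m i) ^ 2) * (2*σ2)⁻¹)) = fun y => gaussKernel d σ2 y m := by
    funext z; simp [gaussKernel, div_eq_mul_inv]
  simp only [Pi.neg_apply] at h2
  rw [heq] at h2
  have hs : (∑ i : Fin d, ((2:ℝ) * (y i - m i)) •
        ContinuousLinearMap.proj (R := ℝ) (φ := fun _ : Fin d => ℝ) i)
      = (2:ℝ) • ∑ i : Fin d, (y i - m i) •
        ContinuousLinearMap.proj (R := ℝ) (φ := fun _ : Fin d => ℝ) i := by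
    rw [Finset.smul_sum]
    exact Finset.sum_congr rfl fun i _ => mul_smul 2 _ _
  rw [hs] at h2
  refine h2.congr_fderiv (Eq.symm ?_)
  rw [gaussD]
  simp only [smul_neg, smul_smul, ← neg_smul]
  congr 1
  rw [gaussKernel, div_eq_mul_inv]
  have hne : σ2 ≠ 0 := ne_of_gt hσ2
  field_simp

lemma continuous_gaussKernel_comp {α : Type*} [TopologicalSpace α] (d : ℕ) (σ2 : ℝ)
    {f g : α → Fin d → ℝ} (hf : Continuous f) (hg : Continuous g) :
    Continuous (fun a => gaussKernel d σ2 (f a) (g a)) := by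
  unfold gaussKernel
  fun_prop

lemma continuous_gaussD_comp {α : Type*} [TopologicalSpace α] (d : ℕ) (σ2 : ℝ)
    {f g : α → Fin d → ℝ} (hf : Continuous f) (hg : Continuous g) :
    Continuous (fun a => gaussD d σ2 (f a) (g a)) := by
  unfold gaussD
  refine Continuous.fun_smul ?_ ?_
  · exact continuous_const.mul (continuous_gaussKernel_comp d σ2 hf hg)
  · exact continuous_finset_sum _ fun i _ =>
      Continuous.smul (((continuous_apply i).comp hf).sub ((continuous_apply i).comp hg))
        continuous_const

set_option maxHeartbeats 1000000 in
/-- Tweedie's formula: if `X_t = μ_t X₀ + σ_t ε` with `ε ∼ N(0, I_d)` independent of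
`X₀ ∼ p₀` (compactly supported density), and `p_t` is the marginal density of `X_t`,
then `∇ log p_t(x) + x/σ_t² = (μ_t/σ_t²) E[X₀ | X_t = x]`, coordinatewise. -/
theorem tweedie_formula
    {d : ℕ} (μt σt : ℝ) (hμt : 0 < μt) (hσt : 0 < σt)
    (p0 : (Fin d → ℝ) → ℝ) (hp0_cont : Continuous p0) (hp0_supp : HasCompactSupport p0)
    (hp0_nonneg : ∀ x, 0 ≤ p0 x) (hp0_int : ∫ x, p0 x = 1)
    (pt : (Fin d → ℝ) → ℝ)
    (hpt : pt = fun x => ∫ x0, gaussKernel d (σt ^ 2) x (μt • x0) * p0 x0)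
    (x : Fin d → ℝ) (k : Fin d) :
    fderiv ℝ (fun y => Real.log (pt y)) x (Pi.single k 1) + x k / σt ^ 2
      = (μt / σt ^ 2) *
          ((∫ x0, x0 k * gaussKernel d (σt ^ 2) x (μt • x0) * p0 x0) / pt x) := by
  have hσ2 : (0:ℝ) < σt ^ 2 := by positivity
  set σ2 : ℝ := σt ^ 2 with hσ2def
  set F : (Fin d → ℝ) → (Fin d → ℝ) → ℝ :=
    fun y x0 => gaussKernel d σ2 y (μt • x0) * p0 x0 with hF
  set F' : (Fin d → ℝ) → (Fin d → ℝ) → (Fin d → ℝ) →L[ℝ] ℝ :=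
    fun y x0 => p0 x0 • gaussD d σ2 y (μt • x0) with hF'
  have hμcont : Continuous fun x0 : Fin d → ℝ => μt • x0 := by fun_prop
  have hμcont2 : Continuous fun p : (Fin d → ℝ) × (Fin d → ℝ) => μt • p.2 := by fun_prop
  have hFcont : ∀ y, Continuous (F y) := fun y =>
    (continuous_gaussKernel_comp d σ2 continuous_const hμcont).mul hp0_cont
  have hFsupp : ∀ y, HasCompactSupport (F y) := fun y => hp0_supp.mul_left
  have hFint : ∀ y, Integrable (F y) := fun y =>
    (hFcont y).integrable_of_hasCompactSupport (hFsupp y)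
  have hp0_integrable : Integrable p0 := hp0_cont.integrable_of_hasCompactSupport hp0_supp
  -- positivity of pt x
  have hptx : pt x = ∫ x0, F x x0 := by rw [hpt]
  have hptpos : 0 < pt x := by
    rw [hptx]
    refine (integral_pos_iff_support_of_nonneg ?_ (hFint x)).2 ?_
    · intro x0
      exact mul_nonneg (le_of_lt (gaussKernel_pos hσ2 _ _)) (hp0_nonneg x0)
    · have hs : Function.support (F x) = Function.support p0 := by
        ext x0
        simp [hF, Function.mem_support, mul_ne_zero_iff,
          (gaussKernel_pos hσ2 x (μt • x0)).ne']
      rw [hs]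
      exact (integral_pos_iff_support_of_nonneg hp0_nonneg hp0_integrable).1
        (by rw [hp0_int]; norm_num)
  -- continuity of F' x
  have hF'cont : Continuous (F' x) :=
    hp0_cont.smul (continuous_gaussD_comp d σ2 continuous_const hμcont)
  -- bound
  obtain ⟨C, hC⟩ := ((isCompact_closedBall x 1).prod hp0_supp).exists_bound_of_continuousOn
    (f := fun p : (Fin d → ℝ) × (Fin d → ℝ) => F' p.1 p.2)
    ((hp0_cont.comp continuous_snd).smul
      (continuous_gaussD_comp d σ2 continuous_fst hμcont2)).continuousOn
  -- derivative under the integral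
  have hderiv : HasFDerivAt (fun y => ∫ x0, F y x0) (∫ x0, F' x x0) x := by
    apply hasFDerivAt_integral_of_dominated_of_fderiv_le
      (bound := (tsupport p0).indicator fun _ => C) (s := Metric.ball x 1) (Metric.ball_mem_nhds x one_pos)
    · exact Filter.Eventually.of_forall fun y => (hFcont y).aestronglyMeasurable
    · exact hFint x
    · exact hF'cont.aestronglyMeasurable
    · refine Filter.Eventually.of_forall fun x0 y hy => ?_
      by_cases hx0 : x0 ∈ tsupport p0
      · have := hC (y, x0) ⟨Metric.ball_subset_closedBall hy, hx0⟩
        simpa [Set.indicator_of_mem hx0] using this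
      · have hz : p0 x0 = 0 := image_eq_zero_of_notMem_tsupport hx0
        simp [hF', hz, Set.indicator_of_notMem hx0]
    · exact (integrableOn_const
          (hp0_supp.isCompact.measure_lt_top.ne)).integrable_indicator
        (isClosed_tsupport p0).measurableSet
    · exact Filter.Eventually.of_forall fun x0 y hy =>
        (hasFDerivAt_gaussKernel hσ2 (μt • x0) y).mul_const (p0 x0)
  have hptderiv : HasFDerivAt pt (∫ x0, F' x x0) x := by rw [hpt]; exact hderiv
  have hfd : fderiv ℝ (fun y => Real.log (pt y)) x = (pt x)⁻¹ • ∫ x0, F' x x0 :=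
    (hptderiv.log (ne_of_gt hptpos)).fderiv
  -- integrability of F' x for integral_apply
  have hF'supp : HasCompactSupport (F' x) := hp0_supp.smul_right
  have hF'int : Integrable (F' x) := hF'cont.integrable_of_hasCompactSupport hF'supp
  have happ : (∫ x0, F' x x0) (Pi.single k 1) = ∫ x0, (F' x x0) (Pi.single k 1) :=
    ContinuousLinearMap.integral_apply hF'int _
  -- pointwise value
  have hval : ∀ x0 : Fin d → ℝ, (F' x x0) (Pi.single k 1)
      = (-(σ2⁻¹ * x k)) * F x x0 + (σ2⁻¹ * μt) *
          (x0 k * gaussKernel d σ2 x (μt • x0) * p0 x0) := by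
    intro x0
    have hsum : (∑ i, (x i - (μt • x0) i) * (Pi.single k 1 : Fin d → ℝ) i)
        = x k - μt * x0 k := by
      simp [Pi.single_apply, mul_ite, Finset.sum_ite_eq']
    simp only [hF', hF, gaussD, ContinuousLinearMap.smul_apply,
      ContinuousLinearMap.coe_sum', Finset.sum_apply, ContinuousLinearMap.smul_apply,
      ContinuousLinearMap.proj_apply, smul_eq_mul]
    rw [hsum]
    ring
  have hint2 : Integrable (fun x0 : Fin d → ℝ =>
      x0 k * gaussKernel d σ2 x (μt • x0) * p0 x0) := by
    apply Continuous.integrable_of_hasCompactSupport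
    · exact ((continuous_apply k).mul
        (continuous_gaussKernel_comp d σ2 continuous_const hμcont)).mul hp0_cont
    · exact hp0_supp.mul_left
  have hsplit : (∫ x0, (F' x x0) (Pi.single k 1))
      = (-(σ2⁻¹ * x k)) * (∫ x0, F x x0) + (σ2⁻¹ * μt) *
          ∫ x0, x0 k * gaussKernel d σ2 x (μt • x0) * p0 x0 := by
    simp_rw [hval]
    rw [integral_add ((hFint x).const_mul _) (hint2.const_mul _),
      MeasureTheory.integral_const_mul, MeasureTheory.integral_const_mul]
  rw [hfd, ContinuousLinearMap.smul_apply, happ, hsplit, smul_eq_mul, ← hptx]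
  have hne : pt x ≠ 0 := ne_of_gt hptpos
  have hne2 : σ2 ≠ 0 := ne_of_gt hσ2
  field_simp
  ring
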